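/- Let a be a nonzero real number. Then the map (τ,η) ↦ (Θ¹₊(a,0;τ,η), Θ²₊(a,0;τ,η), Θ³₊(a,0;τ,η)), defined on the set {(τ,η) ∈ ℝ² : τ > 0}, is injective. -/

import Mathlib

/-- The potential `V(x) = (1 − τx²)² + η²(bx + ax²)²`. -/
noncomputable def Vpot (a b τ η x : ℝ) : ℝ :=
  (1 - τ*x^2)^2 + η^2*(b*x + a*x^2)^2

/-- The right endpoint `x⁺` of the hill interval `[0, x⁺]`. -/
noncomputable def xplus (a b τ η : ℝ) : ℝ :=
  (-(a*b*η^2) + Real.sqrt (τ^2*(2*τ - b^2*η^2) + 2*a^2*η^2*τ)) / (τ^2 + a^2*η^2)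

/-- The left endpoint `x⁻` of the hill interval `[x⁻, 0]`. -/
noncomputable def xminus (a b τ η : ℝ) : ℝ :=
  (-(a*b*η^2) - Real.sqrt (τ^2*(2*τ - b^2*η^2) + 2*a^2*η^2*τ)) / (τ^2 + a^2*η^2)

/-- First component of the period map on the hill interval `[0, x⁺]`. -/
noncomputable def Theta1p (a b τ η : ℝ) : ℝ :=
  ∫ x in (0:ℝ)..(xplus a b τ η), η*(b*x + a*x^2) / Real.sqrt (1 - Vpot a b τ η x)

/-- Second component of the period map on the hill interval `[0, x⁺]`. -/
noncomputable def Theta2p (a b τ η : ℝ) : ℝ :=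
  ∫ x in (0:ℝ)..(xplus a b τ η), x^2*(1 - τ*x^2) / Real.sqrt (1 - Vpot a b τ η x)

/-- Third component of the period map on the hill interval `[0, x⁺]`. -/
noncomputable def Theta3p (a b τ η : ℝ) : ℝ :=
  ∫ x in (0:ℝ)..(xplus a b τ η), η*(b*x + a*x^2)^2 / Real.sqrt (1 - Vpot a b τ η x)

/-- First component of the period map on the hill interval `[x⁻, 0]`. -/
noncomputable def Theta1m (a b τ η : ℝ) : ℝ :=
  ∫ x in (xminus a b τ η)..(0:ℝ), η*(b*x + a*x^2) / Real.sqrt (1 - Vpot a b τ η x)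

/-- Second component of the period map on the hill interval `[x⁻, 0]`. -/
noncomputable def Theta2m (a b τ η : ℝ) : ℝ :=
  ∫ x in (xminus a b τ η)..(0:ℝ), x^2*(1 - τ*x^2) / Real.sqrt (1 - Vpot a b τ η x)

/-- Third component of the period map on the hill interval `[x⁻, 0]`. -/
noncomputable def Theta3m (a b τ η : ℝ) : ℝ :=
  ∫ x in (xminus a b τ η)..(0:ℝ), η*(b*x + a*x^2)^2 / Real.sqrt (1 - Vpot a b τ η x)

/-! ### Auxiliary lemmas: evaluation of the basic integrals -/

lemma aux_s_pos {τ c X x : ℝ} (hc : 0 < c) (hX2 : c*X^2 = 2*τ)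
    (hx : x ∈ Set.Ioo (0:ℝ) X) : 0 < 2*τ - c*x^2 := by
  have h1 : x^2 < X^2 := by nlinarith [hx.1, hx.2]
  nlinarith

lemma aux_deriv_inner (τ c x : ℝ) :
    HasDerivAt (fun y : ℝ => 2*τ - c*y^2) (-(c*(2*x^1))) x :=
  (((hasDerivAt_pow 2 x).const_mul c).const_sub (2*τ)).congr_deriv (by norm_num)

lemma aux_deriv1 (τ c x : ℝ) (hs : 0 < 2*τ - c*x^2) (hc : c ≠ 0) :
    HasDerivAt (fun y => -(Real.sqrt (2*τ - c*y^2)/c)) (x / Real.sqrt (2*τ - c*x^2)) x := by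
  have hg := aux_deriv_inner τ c x
  have hsq : Real.sqrt (2*τ - c*x^2) ≠ 0 := (Real.sqrt_pos.mpr hs).ne'
  have h1 := ((hg.sqrt hs.ne').div_const c).neg
  refine h1.congr_deriv ?_
  symm
  field_simp

lemma aux_deriv3 (τ c x : ℝ) (hs : 0 < 2*τ - c*x^2) (hc : c ≠ 0) :
    HasDerivAt
      (fun y => -(y^2*Real.sqrt (2*τ - c*y^2)/c) - 2/(3*c^2)*(Real.sqrt (2*τ - c*y^2))^3)
      (x^3 / Real.sqrt (2*τ - c*x^2)) x := by
  have hg := aux_deriv_inner τ c x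
  have hsq : Real.sqrt (2*τ - c*x^2) ≠ 0 := (Real.sqrt_pos.mpr hs).ne'
  have hu := hg.sqrt hs.ne'
  have ha := (hasDerivAt_pow 2 x).mul hu
  have hb := hu.pow 3
  have h3 := (ha.div_const c).neg.sub (hb.const_mul (2/(3*c^2)))
  have hu2 : (Real.sqrt (2*τ - c*x^2))^2 = 2*τ - c*x^2 := Real.sq_sqrt hs.le
  refine h3.congr_deriv ?_
  symm
  field_simp
  ring

lemma aux_cont1 (τ c : ℝ) :
    Continuous fun y : ℝ => -(Real.sqrt (2*τ - c*y^2)/c) :=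
  (((continuous_const.sub (continuous_const.mul (continuous_pow 2))).sqrt).div_const c).neg

lemma aux_cont3 (τ c : ℝ) :
    Continuous fun y : ℝ =>
      -(y^2*Real.sqrt (2*τ - c*y^2)/c) - 2/(3*c^2)*(Real.sqrt (2*τ - c*y^2))^3 := by
  have h : Continuous fun y : ℝ => Real.sqrt (2*τ - c*y^2) :=
    (continuous_const.sub (continuous_const.mul (continuous_pow 2))).sqrt
  exact ((((continuous_pow 2).mul h).div_const c).neg).sub (continuous_const.mul (h.pow 3))

lemma aux_int1 (τ c X : ℝ) (hc : 0 < c) (hX0 : 0 ≤ X) (hX2 : c*X^2 = 2*τ) :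
    IntervalIntegrable (fun x => x / Real.sqrt (2*τ - c*x^2)) MeasureTheory.volume 0 X := by
  apply intervalIntegral.intervalIntegrable_deriv_of_nonneg
    (g := fun y => -(Real.sqrt (2*τ - c*y^2)/c)) (aux_cont1 τ c).continuousOn
  · intro x hx
    rw [min_eq_left hX0, max_eq_right hX0] at hx
    exact aux_deriv1 τ c x (aux_s_pos hc hX2 hx) hc.ne'
  · intro x hx
    rw [min_eq_left hX0, max_eq_right hX0] at hx
    exact div_nonneg hx.1.le (Real.sqrt_nonneg _)

lemma aux_int3 (τ c X : ℝ) (hc : 0 < c) (hX0 : 0 ≤ X) (hX2 : c*X^2 = 2*τ) :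
    IntervalIntegrable (fun x => x^3 / Real.sqrt (2*τ - c*x^2)) MeasureTheory.volume 0 X := by
  apply intervalIntegral.intervalIntegrable_deriv_of_nonneg
    (g := fun y => -(y^2*Real.sqrt (2*τ - c*y^2)/c) - 2/(3*c^2)*(Real.sqrt (2*τ - c*y^2))^3)
    (aux_cont3 τ c).continuousOn
  · intro x hx
    rw [min_eq_left hX0, max_eq_right hX0] at hx
    exact aux_deriv3 τ c x (aux_s_pos hc hX2 hx) hc.ne'
  · intro x hx
    rw [min_eq_left hX0, max_eq_right hX0] at hx
    exact div_nonneg (pow_nonneg hx.1.le 3) (Real.sqrt_nonneg _)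

lemma aux_eval1 (τ c X : ℝ) (hc : 0 < c) (hX0 : 0 ≤ X) (hX2 : c*X^2 = 2*τ) :
    ∫ x in (0:ℝ)..X, x / Real.sqrt (2*τ - c*x^2) = Real.sqrt (2*τ)/c := by
  rw [intervalIntegral.integral_eq_sub_of_hasDeriv_right_of_le hX0
    (aux_cont1 τ c).continuousOn
    (fun x hx => (aux_deriv1 τ c x (aux_s_pos hc hX2 hx) hc.ne').hasDerivWithinAt)
    (aux_int1 τ c X hc hX0 hX2)]
  rw [show 2*τ - c*X^2 = 0 by linarith, Real.sqrt_zero,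
    show 2*τ - c*0^2 = 2*τ by ring]
  ring

lemma aux_eval3 (τ c X : ℝ) (hτ : 0 < τ) (hc : 0 < c) (hX0 : 0 ≤ X) (hX2 : c*X^2 = 2*τ) :
    ∫ x in (0:ℝ)..X, x^3 / Real.sqrt (2*τ - c*x^2) = 4*τ*Real.sqrt (2*τ)/(3*c^2) := by
  rw [intervalIntegral.integral_eq_sub_of_hasDeriv_right_of_le hX0
    (aux_cont3 τ c).continuousOn
    (fun x hx => (aux_deriv3 τ c x (aux_s_pos hc hX2 hx) hc.ne').hasDerivWithinAt)
    (aux_int3 τ c X hc hX0 hX2)]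
  have h2 : (Real.sqrt (2*τ))^3 = 2*τ*Real.sqrt (2*τ) := by
    rw [pow_succ, Real.sq_sqrt (by linarith)]
  rw [show 2*τ - c*X^2 = 0 by linarith, Real.sqrt_zero,
    show 2*τ - c*0^2 = 2*τ by ring, h2]
  ring

/-! ### Closed form for the period map components of Family 1 -/

lemma theta_closed (a τ η : ℝ) (hτ : 0 < τ) :
    Theta1p a 0 τ η = η*a*Real.sqrt (2*τ)/(τ^2+a^2*η^2) ∧
    Theta2p a 0 τ η
      = Real.sqrt (2*τ)*(3*(τ^2+a^2*η^2)-4*τ^2)/(3*(τ^2+a^2*η^2)^2) ∧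
    Theta3p a 0 τ η = 4*a^2*τ*η*Real.sqrt (2*τ)/(3*(τ^2+a^2*η^2)^2) := by
  set c : ℝ := τ^2+a^2*η^2 with hcdef
  have hc : 0 < c := by nlinarith [sq_nonneg (a*η)]
  have hXeq : xplus a 0 τ η = Real.sqrt (2*τ*c)/c := by
    rw [xplus, show -(a*0*η^2) = 0 by ring,
      show τ^2*(2*τ - 0^2*η^2) + 2*a^2*η^2*τ = 2*τ*c by rw [hcdef]; ring, zero_add, ← hcdef]
  have hX0 : 0 ≤ xplus a 0 τ η := by
    rw [hXeq]; exact div_nonneg (Real.sqrt_nonneg _) hc.le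
  have hX2 : c*(xplus a 0 τ η)^2 = 2*τ := by
    rw [hXeq, div_pow, Real.sq_sqrt (by nlinarith)]
    field_simp
  set X : ℝ := xplus a 0 τ η with hXdef
  have huIcc : Set.uIcc (0:ℝ) X = Set.Icc 0 X := Set.uIcc_of_le hX0
  have hsv : ∀ x ∈ Set.Icc (0:ℝ) X,
      Real.sqrt (1 - Vpot a 0 τ η x) = x * Real.sqrt (2*τ - c*x^2) := by
    intro x hx
    have h1 : 1 - Vpot a 0 τ η x = x^2*(2*τ - c*x^2) := by
      rw [Vpot, hcdef]; ring
    rw [h1, Real.sqrt_mul (sq_nonneg x), Real.sqrt_sq hx.1]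
  refine ⟨?_, ?_, ?_⟩
  · rw [Theta1p, ← hXdef,
      intervalIntegral.integral_congr
        (g := fun x => (η*a) * (x / Real.sqrt (2*τ - c*x^2))) ?_,
      intervalIntegral.integral_const_mul, aux_eval1 τ c X hc hX0 hX2]
    · ring
    · intro x hx
      rw [huIcc] at hx
      dsimp only
      rw [hsv x hx]
      rcases eq_or_ne x 0 with h | h
      · simp [h]
      · rw [show η*(0*x + a*x^2) = x*(η*a*x) by ring, mul_div_mul_left _ _ h]
        ring
  · rw [Theta2p, ← hXdef,
      intervalIntegral.integral_congr
        (g := fun x => x / Real.sqrt (2*τ - c*x^2)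
          - τ * (x^3 / Real.sqrt (2*τ - c*x^2))) ?_,
      intervalIntegral.integral_sub (aux_int1 τ c X hc hX0 hX2)
        ((aux_int3 τ c X hc hX0 hX2).const_mul τ),
      intervalIntegral.integral_const_mul, aux_eval1 τ c X hc hX0 hX2,
      aux_eval3 τ c X hτ hc hX0 hX2]
    · field_simp
    · intro x hx
      rw [huIcc] at hx
      dsimp only
      rw [hsv x hx]
      rcases eq_or_ne x 0 with h | h
      · simp [h]
      · rw [show x^2*(1 - τ*x^2) = x*(x - τ*x^3) by ring, mul_div_mul_left _ _ h,
          sub_div]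
        ring
  · rw [Theta3p, ← hXdef,
      intervalIntegral.integral_congr
        (g := fun x => (η*a^2) * (x^3 / Real.sqrt (2*τ - c*x^2))) ?_,
      intervalIntegral.integral_const_mul, aux_eval3 τ c X hτ hc hX0 hX2]
    · ring
    · intro x hx
      rw [huIcc] at hx
      dsimp only
      rw [hsv x hx]
      rcases eq_or_ne x 0 with h | h
      · simp [h]
      · rw [show η*(0*x + a*x^2)^2 = x*(η*a^2*x^3) by ring, mul_div_mul_left _ _ h]
        ring

set_option maxHeartbeats 1000000 in
/-- The period map of Family 1 (parameters `(a,0)`, `a ≠ 0`) is one-to-one on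
`{(τ,η) : τ > 0}`. -/
theorem stmt_7 (a : ℝ) (ha : a ≠ 0) :
    Set.InjOn
      (fun p : ℝ × ℝ => (Theta1p a 0 p.1 p.2, Theta2p a 0 p.1 p.2, Theta3p a 0 p.1 p.2))
      {p : ℝ × ℝ | 0 < p.1} := by
  rintro ⟨τ₁, η₁⟩ h₁ ⟨τ₂, η₂⟩ h₂ h
  simp only [Set.mem_setOf_eq] at h₁ h₂
  obtain ⟨hA1, hA2, hA3⟩ := theta_closed a τ₁ η₁ h₁
  obtain ⟨hB1, hB2, hB3⟩ := theta_closed a τ₂ η₂ h₂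
  simp only [Prod.mk.injEq] at h
  obtain ⟨e1, e2, e3⟩ := h
  rw [hA1, hB1] at e1
  rw [hA2, hB2] at e2
  rw [hA3, hB3] at e3
  have hc₁ : 0 < τ₁^2 + a^2*η₁^2 := by nlinarith [sq_nonneg (a*η₁)]
  have hc₂ : 0 < τ₂^2 + a^2*η₂^2 := by nlinarith [sq_nonneg (a*η₂)]
  have hQ₁ : 0 < Real.sqrt (2*τ₁) := Real.sqrt_pos.mpr (by linarith)
  have hQ₂ : 0 < Real.sqrt (2*τ₂) := Real.sqrt_pos.mpr (by linarith)
  have hQsq₁ : (Real.sqrt (2*τ₁))^2 = 2*τ₁ := Real.sq_sqrt (by linarith)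
  have hQsq₂ : (Real.sqrt (2*τ₂))^2 = 2*τ₂ := Real.sq_sqrt (by linarith)
  have E1' := (div_eq_div_iff hc₁.ne' hc₂.ne').mp e1
  have E1 : η₁*Real.sqrt (2*τ₁)*(τ₂^2+a^2*η₂^2)
      = η₂*Real.sqrt (2*τ₂)*(τ₁^2+a^2*η₁^2) := by
    apply mul_left_cancel₀ ha
    linear_combination E1'
  have E3' := (div_eq_div_iff (by positivity : (3:ℝ)*(τ₁^2+a^2*η₁^2)^2 ≠ 0)
      (by positivity : (3:ℝ)*(τ₂^2+a^2*η₂^2)^2 ≠ 0)).mp e3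
  have E3 : τ₁*η₁*Real.sqrt (2*τ₁)*(τ₂^2+a^2*η₂^2)^2
      = τ₂*η₂*Real.sqrt (2*τ₂)*(τ₁^2+a^2*η₁^2)^2 := by
    apply mul_left_cancel₀ (show (12:ℝ)*a^2 ≠ 0 by positivity)
    linear_combination E3'
  have E2' := (div_eq_div_iff (by positivity : (3:ℝ)*(τ₁^2+a^2*η₁^2)^2 ≠ 0)
      (by positivity : (3:ℝ)*(τ₂^2+a^2*η₂^2)^2 ≠ 0)).mp e2
  rcases eq_or_ne η₁ 0 with hη₁ | hη₁
  · -- both η are zero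
    subst hη₁
    have hη₂ : η₂ = 0 := by
      rcases eq_or_ne η₂ 0 with h0 | h0
      · exact h0
      · exfalso
        have hz : η₂*Real.sqrt (2*τ₂)*(τ₁^2+a^2*0^2) = 0 := by linear_combination -E1
        exact (mul_ne_zero (mul_ne_zero h0 hQ₂.ne') hc₁.ne') hz
    subst hη₂
    have key : Real.sqrt (2*τ₁)*τ₂^2 = Real.sqrt (2*τ₂)*τ₁^2 := by
      apply mul_left_cancel₀ (show (-3:ℝ)*τ₁^2*τ₂^2 ≠ 0 by positivity)
      linear_combination E2'
    have sqk : (Real.sqrt (2*τ₁))^2*τ₂^4 = (Real.sqrt (2*τ₂))^2*τ₁^4 := by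
      linear_combination (Real.sqrt (2*τ₁)*τ₂^2 + Real.sqrt (2*τ₂)*τ₁^2)*key
    have t : τ₁*τ₂^4 = τ₂*τ₁^4 := by
      linear_combination sqk/2 - (τ₂^4/2)*hQsq₁ + (τ₁^4/2)*hQsq₂
    have cube : τ₂^3 = τ₁^3 := by
      apply mul_left_cancel₀ (mul_ne_zero h₁.ne' h₂.ne')
      linear_combination t
    have : τ₁ = τ₂ := by
      rcases lt_trichotomy τ₁ τ₂ with hlt | heq | hgt
      · exfalso
        have h3 : τ₁^3 < τ₂^3 := pow_lt_pow_left₀ hlt h₁.le (by norm_num)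
        linarith
      · exact heq
      · exfalso
        have h3 : τ₂^3 < τ₁^3 := pow_lt_pow_left₀ hgt h₂.le (by norm_num)
        linarith
    simp [this]
  · -- both η are nonzero
    have hη₂ : η₂ ≠ 0 := by
      rcases eq_or_ne η₂ 0 with h0 | h0
      · exfalso
        subst h0
        have hz : η₁*Real.sqrt (2*τ₁)*(τ₂^2+a^2*0^2) = 0 := by linear_combination E1
        exact (mul_ne_zero (mul_ne_zero hη₁ hQ₁.ne') hc₂.ne') hz
      · exact h0
    have R : τ₁*(τ₂^2+a^2*η₂^2) = τ₂*(τ₁^2+a^2*η₁^2) := by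
      apply mul_left_cancel₀
        (show η₂*Real.sqrt (2*τ₂)*(τ₁^2+a^2*η₁^2) ≠ 0 from
          mul_ne_zero (mul_ne_zero hη₂ hQ₂.ne') hc₁.ne')
      linear_combination E3 - τ₁*(τ₂^2+a^2*η₂^2)*E1
    have Esq : η₁^2*(Real.sqrt (2*τ₁))^2*(τ₂^2+a^2*η₂^2)^2
        = η₂^2*(Real.sqrt (2*τ₂))^2*(τ₁^2+a^2*η₁^2)^2 := by
      linear_combination (η₁*Real.sqrt (2*τ₁)*(τ₂^2+a^2*η₂^2)
        + η₂*Real.sqrt (2*τ₂)*(τ₁^2+a^2*η₁^2))*E1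
    have U : τ₁*a^2*η₁^2*(τ₂^2+a^2*η₂^2)^2 = τ₂*a^2*η₂^2*(τ₁^2+a^2*η₁^2)^2 := by
      linear_combination (a^2/2)*Esq - (a^2*η₁^2*(τ₂^2+a^2*η₂^2)^2/2)*hQsq₁
        + (a^2*η₂^2*(τ₁^2+a^2*η₁^2)^2/2)*hQsq₂
    have S : τ₁^2*(τ₂^2+a^2*η₂^2) = τ₂^2*(τ₁^2+a^2*η₁^2) := by
      apply mul_left_cancel₀ (mul_ne_zero h₂.ne' hc₁.ne')
      linear_combination -U + ((τ₁^2+a^2*η₁^2 - τ₁^2)*(τ₂^2+a^2*η₂^2))*R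
    have τeq : τ₁ = τ₂ := by
      apply mul_left_cancel₀ (mul_ne_zero h₂.ne' hc₁.ne')
      linear_combination S - τ₁*R
    subst τeq
    have ceq : τ₁^2+a^2*η₂^2 = τ₁^2+a^2*η₁^2 := by
      apply mul_left_cancel₀ h₁.ne'
      linear_combination R
    have ηeq : η₁ = η₂ := by
      apply mul_right_cancel₀
        (mul_ne_zero hQ₁.ne' hc₁.ne')
      calc η₁*(Real.sqrt (2*τ₁)*(τ₁^2+a^2*η₁^2))
          = η₁*Real.sqrt (2*τ₁)*(τ₁^2+a^2*η₂^2) := by rw [ceq]; ring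
        _ = η₂*Real.sqrt (2*τ₁)*(τ₁^2+a^2*η₁^2) := E1
        _ = η₂*(Real.sqrt (2*τ₁)*(τ₁^2+a^2*η₁^2)) := by ring
    simp [ηeq]
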